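/- For every integer m, the coefficients of Q_{p,q,r} satisfy |a_m − a_{m−qr}| ≤ 2; by the symmetry of the parameters, the same bound holds with qr replaced by rp or by pq. -/

import Mathlib

open Polynomial
open scoped Classical

/-- The defining identity of the ternary inclusion-exclusion polynomial `Q_{p,q,r}`:
`Q·(z^{qr}-1)(z^{rp}-1)(z^{pq}-1)(z-1) = (z^{pqr}-1)(z^r-1)(z^q-1)(z^p-1)`. -/
def ternaryId (p q r : ℕ) (Q : Polynomial ℤ) : Prop :=
  Q * (((X : Polynomial ℤ) ^ (q * r) - 1) * ((X : Polynomial ℤ) ^ (r * p) - 1) *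
      ((X : Polynomial ℤ) ^ (p * q) - 1) * ((X : Polynomial ℤ) - 1)) =
    ((X : Polynomial ℤ) ^ (p * q * r) - 1) * ((X : Polynomial ℤ) ^ r - 1) *
      ((X : Polynomial ℤ) ^ q - 1) * ((X : Polynomial ℤ) ^ p - 1)

/-- The coefficient `a_m` of `z^m` in `Q`, indexed by `m : ℤ`, with the convention
that `a_m = 0` for `m < 0` (and automatically `a_m = 0` for `m` beyond the degree). -/
def aCoeff (Q : Polynomial ℤ) (m : ℤ) : ℤ :=
  if 0 ≤ m then Q.coeff m.toNat else 0

/-- The characteristic function `χ` of integers representable as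
`i·qr + j·rp + k·pq` with integers `i, j, k ≥ 0`. -/
noncomputable def chi (p q r : ℕ) (n : ℤ) : ℤ :=
  if ∃ i j k : ℕ, n = (i * (q * r) + j * (r * p) + k * (p * q) : ℕ) then 1 else 0

namespace Stmt14

lemma not_rep_shift {p q r : ℕ} (hp : 1 ≤ p) (hq : 1 ≤ q) (hr : 1 ≤ r)
    (hqr : Nat.Coprime q r) {j : ℕ} (hjq : j < q) :
    ¬ ∃ i j' : ℕ, j * (r*p) = i * (p*q) + j' * (r*p) + p*q := by
  rintro ⟨i, j', hEq⟩
  have hp' : 0 < p := hp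
  have h3 : j*r = i*q + j'*r + q := by
    have h2 : p * (j*r) = p * (i*q + j'*r + q) := by
      calc p * (j*r) = j * (r*p) := by ring
      _ = i * (p*q) + j' * (r*p) + p*q := hEq
      _ = p * (i*q + j'*r + q) := by ring
    exact Nat.eq_of_mul_eq_mul_left hp' h2
  have hj' : j' < j := by
    by_contra hc
    push_neg at hc
    have : j * r ≤ j' * r := Nat.mul_le_mul_right r hc
    omega
  obtain ⟨d, rfl⟩ := Nat.exists_eq_add_of_lt hj'
  have h4 : (d+1) * r = (i+1) * q := by
    zify at h3 ⊢
    linear_combination h3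
  have h5 : r ∣ (i+1) := by
    refine (Nat.Coprime.dvd_of_dvd_mul_right hqr.symm) ?_
    exact ⟨d+1, by linarith [h4]⟩
  have h6 : r ≤ i+1 := Nat.le_of_dvd (by omega) h5
  have h7 : r * q ≤ (i+1) * q := Nat.mul_le_mul_right q h6
  have h8 : (d+1) * r < q * r := by
    apply Nat.mul_lt_mul_of_lt_of_le (by omega) (le_refl r) hr
  have : q * r = r * q := by ring
  omega

lemma rep_min {p q r : ℕ} (hp : 1 ≤ p) (hq : 1 ≤ q) (hr : 1 ≤ r)
    (hqr : Nat.Coprime q r) {n : ℕ} (h1 : ∃ i j : ℕ, n = i * (p*q) + j * (r*p))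
    (h2 : ¬ ∃ i j : ℕ, n = i * (p*q) + j * (r*p) + p*q) :
    ∃ j, j < q ∧ n = j * (r*p) := by
  have hP : ∃ i, ∃ j, n = i * (p*q) + j * (r*p) := h1
  obtain ⟨j, hj⟩ := Nat.find_spec hP
  rcases Nat.eq_zero_or_pos (Nat.find hP) with h0 | h0
  · rw [h0] at hj
    simp only [Nat.zero_mul, Nat.zero_add] at hj
    refine ⟨j, ?_, hj⟩
    by_contra hc
    push_neg at hc
    obtain ⟨j₂, rfl⟩ := Nat.exists_eq_add_of_le hc
    obtain ⟨r₂, rfl⟩ := Nat.exists_eq_add_of_le hr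
    exact h2 ⟨r₂, j₂, by rw [hj]; ring⟩
  · obtain ⟨i', hi'⟩ : ∃ i', Nat.find hP = i' + 1 := ⟨Nat.find hP - 1, by omega⟩
    rw [hi'] at hj
    exact absurd ⟨i', j, by rw [hj]; ring⟩ h2

/-- The key coefficient identity. -/
lemma key (p q r : ℕ) (hp : 1 ≤ p) (hq : 1 ≤ q) (hr : 1 ≤ r) (hqr : Nat.Coprime q r) (n : ℕ) :
    (if ∃ i j : ℕ, n = i*(p*q) + j*(r*p) then (1:ℤ) else 0)
    = (if ∃ i j : ℕ, n = i*(p*q) + j*(r*p) + p*q then 1 else 0)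
    + (if ∃ j, j < q ∧ n = j*(r*p) then 1 else 0) := by
  by_cases h1 : ∃ i j : ℕ, n = i*(p*q) + j*(r*p)
  · rw [if_pos h1]
    by_cases h2 : ∃ i j : ℕ, n = i*(p*q) + j*(r*p) + p*q
    · rw [if_pos h2, if_neg, add_zero]
      rintro ⟨j, hjq, rfl⟩
      exact not_rep_shift hp hq hr hqr hjq h2
    · rw [if_neg h2, if_pos (rep_min hp hq hr hqr h1 h2), zero_add]
  · rw [if_neg h1, if_neg, if_neg, add_zero]
    · rintro ⟨j, _, rfl⟩
      exact h1 ⟨0, j, by ring⟩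
    · rintro ⟨i, j, rfl⟩
      exact h1 ⟨i+1, j, by ring⟩

noncomputable section
open PowerSeries

abbrev PS := PowerSeries ℤ
abbrev XX : PS := PowerSeries.X

lemma geo (n : ℕ) : (∑ t ∈ Finset.range n, XX^t) * (1 - XX) = 1 - XX^n := by
  linear_combination -(geom_sum_mul (XX) n)

lemma czero {k : ℕ} (hk : k ≠ 0) : (PowerSeries.constantCoeff : PS →+* ℤ) ((1:PS) - XX^k) = 1 := by
  simp [zero_pow hk]

lemma one_sub_pow_ne {k : ℕ} (hk : k ≠ 0) : ((1:PS) - XX^k) ≠ 0 := by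
  intro h
  have := congrArg (PowerSeries.constantCoeff : PS →+* ℤ) h
  rw [czero hk] at this
  simp at this

lemma one_sub_X_ne : ((1:PS) - XX) ≠ 0 := by
  have := one_sub_pow_ne (k := 1) one_ne_zero
  simpa using this

lemma swap (a b : ℕ) :
    (∑ t ∈ Finset.range a, XX^t) * (1 - XX^b) = (∑ t ∈ Finset.range b, XX^t) * (1 - XX^a) := by
  apply mul_right_cancel₀ one_sub_X_ne
  linear_combination (1 - XX^b) * geo a - (1 - XX^a) * geo b

lemma comb_coeff (q k : ℕ) (hk : 0 < k) (n : ℕ) :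
    (PowerSeries.coeff n) (∑ j ∈ Finset.range q, XX^(j*k))
      = if ∃ j, j < q ∧ n = j*k then 1 else 0 := by
  rw [map_sum]
  by_cases h : ∃ j, j < q ∧ n = j*k
  · obtain ⟨j₀, hj₀q, rfl⟩ := h
    rw [if_pos ⟨j₀, hj₀q, rfl⟩]
    rw [Finset.sum_eq_single_of_mem j₀ (Finset.mem_range.2 hj₀q)]
    · simp [PowerSeries.coeff_X_pow]
    · intro b _ hb
      rw [PowerSeries.coeff_X_pow, if_neg]
      intro hEq
      exact hb (Nat.eq_of_mul_eq_mul_right hk hEq.symm)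
  · rw [if_neg h, Finset.sum_eq_zero]
    intro j hj
    rw [PowerSeries.coeff_X_pow, if_neg]
    intro hEq
    exact h ⟨j, Finset.mem_range.1 hj, hEq⟩

def chif (p q r : ℕ) : ℕ → ℤ := fun n => if ∃ i j : ℕ, n = i*(p*q) + j*(r*p) then 1 else 0
def Sps (p q r : ℕ) : PS := PowerSeries.mk (chif p q r)
def Fps (p q r : ℕ) : PS := Sps p q r * ∑ t ∈ Finset.range (min p q), XX^t

lemma hI (p q r : ℕ) (hp : 1 ≤ p) (hq : 1 ≤ q) (hr : 1 ≤ r) (hqr : Nat.Coprime q r) :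
    Sps p q r * (1 - XX^(p*q)) = ∑ j ∈ Finset.range q, XX^(j*(r*p)) := by
  ext n
  rw [comb_coeff q (r*p) (by positivity) n]
  rw [mul_one_sub, map_sub, PowerSeries.coeff_mul_X_pow']
  have hshift : (if p*q ≤ n then (PowerSeries.coeff (n - p*q)) (Sps p q r) else 0)
      = (if ∃ i j : ℕ, n = i*(p*q) + j*(r*p) + p*q then (1:ℤ) else 0) := by
    rw [Sps]
    by_cases hle : p*q ≤ n
    · rw [if_pos hle, PowerSeries.coeff_mk, chif]
      congr 1
      apply propext
      constructor
      · rintro ⟨i, j, hsub⟩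
        exact ⟨i, j, by rw [← (Nat.sub_eq_iff_eq_add hle).mp hsub]⟩
      · rintro ⟨i, j, hsub⟩
        exact ⟨i, j, (Nat.sub_eq_iff_eq_add hle).mpr hsub⟩
    · rw [if_neg hle, if_neg]
      rintro ⟨i, j, rfl⟩
      exact hle (Nat.le_add_left _ _)
  rw [hshift, Sps, PowerSeries.coeff_mk, chif]
  have := key p q r hp hq hr hqr n
  linarith [this]

lemma chif_dvd {p q r n : ℕ} (h : chif p q r n ≠ 0) : p ∣ n := by
  rw [chif] at h
  by_cases hc : ∃ i j : ℕ, n = i*(p*q) + j*(r*p)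
  · obtain ⟨i, j, rfl⟩ := hc
    exact ⟨i*q + j*r, by ring⟩
  · simp [hc] at h

lemma chif_nonneg (p q r n : ℕ) : 0 ≤ chif p q r n := by
  rw [chif]; split <;> norm_num

lemma chif_le_one (p q r n : ℕ) : chif p q r n ≤ 1 := by
  rw [chif]; split <;> norm_num

lemma Fco (p q r : ℕ) (n : ℕ) :
    (PowerSeries.coeff n) (Fps p q r)
      = ∑ t ∈ Finset.range (min p q), (if t ≤ n then chif p q r (n - t) else 0) := by
  rw [Fps, Finset.mul_sum, map_sum]
  refine Finset.sum_congr rfl fun t _ => ?_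
  rw [PowerSeries.coeff_mul_X_pow', Sps]
  split <;> simp [PowerSeries.coeff_mk]

lemma F_nonneg (p q r : ℕ) (n : ℕ) : 0 ≤ (PowerSeries.coeff n) (Fps p q r) := by
  rw [Fco]
  apply Finset.sum_nonneg
  intro t _
  split
  · exact chif_nonneg p q r _
  · exact le_refl _

lemma F_le_one (p q r : ℕ) (hp : 1 ≤ p) (n : ℕ) :
    (PowerSeries.coeff n) (Fps p q r) ≤ 1 := by
  rw [Fco]
  set f : ℕ → ℤ := fun t => if t ≤ n then chif p q r (n - t) else 0 with hf
  by_cases hex : ∃ t ∈ Finset.range (min p q), f t ≠ 0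
  · obtain ⟨t₀, ht₀, hne⟩ := hex
    rw [Finset.sum_eq_single_of_mem t₀ ht₀ ?_]
    · split
      · exact chif_le_one p q r _
      · norm_num
    · intro b hb hbne
      by_contra hbne0
      have hinfo : ∀ t, f t ≠ 0 → t ≤ n ∧ p ∣ (n - t) := by
        intro t ht
        dsimp only [f] at ht
        by_cases hle : t ≤ n
        · rw [if_pos hle] at ht
          exact ⟨hle, chif_dvd ht⟩
        · rw [if_neg hle] at ht; exact absurd rfl ht
      obtain ⟨hbn, hbd⟩ := hinfo b hbne0
      obtain ⟨htn, htd⟩ := hinfo t₀ hne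
      have hb' : b < p := lt_of_lt_of_le (Finset.mem_range.1 hb) (min_le_left p q)
      have ht' : t₀ < p := lt_of_lt_of_le (Finset.mem_range.1 ht₀) (min_le_left p q)
      have e1 : b ≡ n [MOD p] := (Nat.modEq_iff_dvd' hbn).mpr hbd
      have e2 : t₀ ≡ n [MOD p] := (Nat.modEq_iff_dvd' htn).mpr htd
      have e3 : b ≡ t₀ [MOD p] := e1.trans e2.symm
      have : b = t₀ := by
        have := e3
        unfold Nat.ModEq at this
        rwa [Nat.mod_eq_of_lt hb', Nat.mod_eq_of_lt ht'] at this
      exact hbne this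
  · push_neg at hex
    rw [Finset.sum_eq_zero fun t ht => hex t ht]
    norm_num

lemma hII (p q r : ℕ) :
    (∑ j ∈ Finset.range q, XX^(j*(r*p))) * (1 - XX^(r*p)) = 1 - XX^(p*q*r) := by
  have h := geom_sum_mul (XX^(r*p)) q
  have e1 : ∑ j ∈ Finset.range q, XX^(j*(r*p)) = ∑ j ∈ Finset.range q, (XX^(r*p))^j := by
    refine Finset.sum_congr rfl fun j _ => ?_
    rw [← pow_mul, Nat.mul_comm]
  have e2 : (XX^(r*p))^q = XX^(p*q*r) := by
    rw [← pow_mul]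
    congr 1
    ring
  rw [e1]
  linear_combination -h - e2

lemma hmin (p q r : ℕ) :
    (∑ t ∈ Finset.range (min p q), XX^t) * (1 - XX^(max p q))
      = (∑ t ∈ Finset.range q, XX^t) * (1 - XX^p) := by
  rcases le_total p q with h | h
  · rw [min_eq_left h, max_eq_right h]
    exact swap p q
  · rw [min_eq_right h, max_eq_left h]

lemma STeq (p q r : ℕ) (hp : 1 ≤ p) (hq : 1 ≤ q) (hr : 1 ≤ r) (hqr : Nat.Coprime q r)
    (Q : Polynomial ℤ) (hQ : ternaryId p q r Q) :
    Fps p q r * ((1 - XX^(max p q)) * (1 - XX^r)) = (Q : PS) * (1 - XX^(q*r)) := by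
  have hQc : (Q : PS) * ((1 - XX^(q*r)) * (1 - XX^(r*p)) * (1 - XX^(p*q)) * (1 - XX))
      = (1 - XX^(p*q*r)) * (1 - XX^r) * (1 - XX^q) * (1 - XX^p) := by
    have := congrArg (fun P : Polynomial ℤ => (P : PS)) hQ
    push_cast at this
    linear_combination this
  apply mul_right_cancel₀ (show ((1 - XX^(r*p)) * (1 - XX^(p*q)) * (1 - XX) : PS) ≠ 0 from ?_)
  · have h1 := hI p q r hp hq hr hqr
    have h2 := hII p q r
    have h3 := geo q
    have h4 := hmin p q r
    have h5 := hQc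
    rw [Fps]
    linear_combination (Sps p q r * (1 - XX^r) * (1 - XX^(r*p)) * (1 - XX^(p*q)) * (1 - XX)) * h4
      + ((∑ t ∈ Finset.range q, XX^t) * (1 - XX^p) * (1 - XX^r) * (1 - XX^(r*p)) * (1 - XX)) * h1
      + ((∑ t ∈ Finset.range q, XX^t) * (1 - XX^p) * (1 - XX^r) * (1 - XX)) * h2
      + ((1 - XX^(p*q*r)) * (1 - XX^p) * (1 - XX^r)) * h3
      - h5
  · apply mul_ne_zero (mul_ne_zero ?_ ?_) ?_
    · exact one_sub_pow_ne (by positivity)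
    · exact one_sub_pow_ne (by positivity)
    · exact one_sub_X_ne

lemma FX01 (p q r : ℕ) (hp : 1 ≤ p) (k n : ℕ) :
    0 ≤ (PowerSeries.coeff n) (Fps p q r * XX^k)
      ∧ (PowerSeries.coeff n) (Fps p q r * XX^k) ≤ 1 := by
  rw [PowerSeries.coeff_mul_X_pow']
  split
  · exact ⟨F_nonneg p q r _, F_le_one p q r hp _⟩
  · norm_num

lemma STbound (p q r : ℕ) (hp : 1 ≤ p) (n : ℕ) :
    |(PowerSeries.coeff n) (Fps p q r * ((1 - XX^(max p q)) * (1 - XX^r)))| ≤ 2 := by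
  have hexp : Fps p q r * ((1 - XX^(max p q)) * (1 - XX^r))
      = Fps p q r - Fps p q r * XX^(max p q) - Fps p q r * XX^r
        + Fps p q r * XX^(max p q + r) := by
    rw [pow_add]; ring
  rw [hexp, map_add, map_sub, map_sub]
  have h0 := F_nonneg p q r n
  have h1 := F_le_one p q r hp n
  have h2 := FX01 p q r hp (max p q) n
  have h3 := FX01 p q r hp r n
  have h4 := FX01 p q r hp (max p q + r) n
  rw [abs_le]
  constructor <;> linarith [h2.1, h2.2, h3.1, h3.2, h4.1, h4.2]

lemma master (p q r : ℕ) (hp : 1 ≤ p) (hq : 1 ≤ q) (hr : 1 ≤ r) (hqr : Nat.Coprime q r)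
    (Q : Polynomial ℤ) (hQ : ternaryId p q r Q) :
    ∀ m : ℤ, |aCoeff Q m - aCoeff Q (m - (q : ℤ) * r)| ≤ 2 := by
  have hbound : ∀ n : ℕ, |Q.coeff n - (if q*r ≤ n then Q.coeff (n - q*r) else 0)| ≤ 2 := by
    intro n
    have hco : (PowerSeries.coeff n) (Fps p q r * ((1 - XX^(max p q)) * (1 - XX^r)))
        = Q.coeff n - (if q*r ≤ n then Q.coeff (n - q*r) else 0) := by
      rw [STeq p q r hp hq hr hqr Q hQ, mul_one_sub, map_sub,
        PowerSeries.coeff_mul_X_pow', Polynomial.coeff_coe]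
      congr 1
      split <;> simp [Polynomial.coeff_coe]
    rw [← hco]
    exact STbound p q r hp n
  intro m
  have hcast : ((q*r : ℕ) : ℤ) = (q:ℤ)*r := by push_cast; ring
  rcases lt_or_ge m 0 with hm | hm
  · have h1 : aCoeff Q m = 0 := if_neg (by omega)
    have h2 : aCoeff Q (m - (q:ℤ)*r) = 0 := by
      refine if_neg ?_
      have : (0:ℤ) ≤ (q:ℤ)*r := by positivity
      omega
    rw [h1, h2]
    norm_num
  · have h1 : aCoeff Q m = Q.coeff m.toNat := if_pos hm
    have hb := hbound m.toNat
    by_cases hge : (q:ℤ)*r ≤ m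
    · have hge' : q*r ≤ m.toNat := by omega
      have h2 : aCoeff Q (m - (q:ℤ)*r) = Q.coeff (m.toNat - q*r) := by
        rw [aCoeff, if_pos (by omega)]
        congr 1
        omega
      rw [h1, h2]
      rwa [if_pos hge'] at hb
    · have h2 : aCoeff Q (m - (q:ℤ)*r) = 0 := if_neg (by omega)
      rw [h1, h2]
      rw [if_neg (by omega)] at hb
      simpa using hb

lemma ternaryId_rotate {p q r : ℕ} {Q : Polynomial ℤ} (h : ternaryId p q r Q) :
    ternaryId q r p Q := by
  unfold ternaryId at h ⊢
  rw [show q*r*p = p*q*r from by ring]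
  linear_combination h

end
end Stmt14

/-- `|a_m - a_{m-qr}| ≤ 2`, and likewise with `qr` replaced by `rp` or `pq`. -/
theorem stmt_14 (p q r : ℕ) (hp : 3 ≤ p) (hq : 3 ≤ q) (hr : 3 ≤ r)
    (hpq : Nat.Coprime p q) (hqr : Nat.Coprime q r) (hrp : Nat.Coprime r p)
    (Q : Polynomial ℤ) (hQ : ternaryId p q r Q) :
    ∀ m : ℤ, |aCoeff Q m - aCoeff Q (m - (q : ℤ) * r)| ≤ 2 ∧
      |aCoeff Q m - aCoeff Q (m - (r : ℤ) * p)| ≤ 2 ∧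
      |aCoeff Q m - aCoeff Q (m - (p : ℤ) * q)| ≤ 2 := by
  intro m
  exact ⟨Stmt14.master p q r (by omega) (by omega) (by omega) hqr Q hQ m,
    Stmt14.master q r p (by omega) (by omega) (by omega) hrp Q (Stmt14.ternaryId_rotate hQ) m,
    Stmt14.master r p q (by omega) (by omega) (by omega) hpq Q
      (Stmt14.ternaryId_rotate (Stmt14.ternaryId_rotate hQ)) m⟩
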